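/- Let p be an odd prime and A = T(a,b,c)/J the 𝔽_p-algebra with generators a,b,c and relations ab − ba = c, ac = ca, bc = cb, a^p = b^p = c^p = 0. Then {c^i b^j a^k : 0 ≤ i,j,k ≤ p−1} is a basis of A over 𝔽_p; in particular dim A = p³. -/

import Mathlib

/-! STATEMENT 15: for `p` an odd prime, the `𝔽_p`-algebra `A = T(a,b,c)/J` with
relations `ab - ba = c`, `ac = ca`, `bc = cb`, `a^p = b^p = c^p = 0` has
`{c^i b^j a^k : 0 ≤ i,j,k ≤ p-1}` as a basis; in particular `dim A = p³`. -/

/-- the free associative `𝔽_p`-algebra on three generators `a, b, c`. -/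
abbrev FreeHeis (p : ℕ) := FreeAlgebra (ZMod p) (Fin 3)

/-- the defining relations `ab = ba + c`, `ac = ca`, `bc = cb`, `a^p = b^p = c^p = 0`. -/
def heisRel (p : ℕ) : FreeHeis p → FreeHeis p → Prop := fun u v =>
  letI a := FreeAlgebra.ι (ZMod p) (0 : Fin 3)
  letI b := FreeAlgebra.ι (ZMod p) (1 : Fin 3)
  letI c := FreeAlgebra.ι (ZMod p) (2 : Fin 3)
  (u = a * b ∧ v = b * a + c) ∨ (u = a * c ∧ v = c * a) ∨ (u = b * c ∧ v = c * b) ∨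
  (u = a ^ p ∧ v = 0) ∨ (u = b ^ p ∧ v = 0) ∨ (u = c ^ p ∧ v = 0)

/-- `A = T(a,b,c)/J`. -/
abbrev HeisAlg (p : ℕ) := RingQuot (heisRel p)

/-- the monomials `c^i b^j a^k`, `0 ≤ i, j, k ≤ p-1`, in `A`. -/
noncomputable def heisMonomial (p : ℕ) (t : Fin p × Fin p × Fin p) : HeisAlg p :=
  RingQuot.mkAlgHom (ZMod p) (heisRel p) (FreeAlgebra.ι (ZMod p) (2 : Fin 3)) ^ (t.1 : ℕ) *
  RingQuot.mkAlgHom (ZMod p) (heisRel p) (FreeAlgebra.ι (ZMod p) (1 : Fin 3)) ^ (t.2.1 : ℕ) *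
  RingQuot.mkAlgHom (ZMod p) (heisRel p) (FreeAlgebra.ι (ZMod p) (0 : Fin 3)) ^ (t.2.2 : ℕ)

namespace HeisAux


variable (p : ℕ)

abbrev M := (Fin p × Fin p × Fin p) → ZMod p

noncomputable def E (i j k : ℕ) : M p :=
  if h : i < p ∧ j < p ∧ k < p then Pi.single (⟨i, h.1⟩, ⟨j, h.2.1⟩, ⟨k, h.2.2⟩) 1 else 0

lemma E_of_lt {i j k : ℕ} (h : i < p ∧ j < p ∧ k < p) :
    E p i j k = Pi.single ((⟨i, h.1⟩, ⟨j, h.2.1⟩, ⟨k, h.2.2⟩) : Fin p × Fin p × Fin p) 1 :=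
  dif_pos h

lemma E_of_not_lt {i j k : ℕ} (h : ¬ (i < p ∧ j < p ∧ k < p)) : E p i j k = 0 := dif_neg h

noncomputable def bM : Module.Basis (Fin p × Fin p × Fin p) (ZMod p) (M p) :=
  Pi.basisFun (ZMod p) _

lemma bM_eq (t : Fin p × Fin p × Fin p) : bM p t = E p t.1 t.2.1 t.2.2 := by
  rw [E_of_lt p ⟨t.1.2, t.2.1.2, t.2.2.2⟩, bM, Pi.basisFun_apply]

noncomputable def Sop : Module.End (ZMod p) (M p) :=
  (bM p).constr (ZMod p) fun t => E p t.1 t.2.1 (t.2.2 + 1)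

noncomputable def Nop : Module.End (ZMod p) (M p) :=
  (bM p).constr (ZMod p) fun t => ((t.2.1 : ℕ) : ZMod p) • E p (t.1 + 1) (t.2.1 - 1) t.2.2

noncomputable def Bop : Module.End (ZMod p) (M p) :=
  (bM p).constr (ZMod p) fun t => E p t.1 (t.2.1 + 1) t.2.2

noncomputable def Cop : Module.End (ZMod p) (M p) :=
  (bM p).constr (ZMod p) fun t => E p (t.1 + 1) t.2.1 t.2.2

noncomputable def Aop : Module.End (ZMod p) (M p) := Sop p + Nop p

lemma Sop_E (i j k : ℕ) : Sop p (E p i j k) = E p i j (k + 1) := by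
  by_cases h : i < p ∧ j < p ∧ k < p
  · rw [E_of_lt p h, ← Pi.basisFun_apply, ← bM, Sop, Module.Basis.constr_basis]
  · rw [E_of_not_lt p h, map_zero, eq_comm, E_of_not_lt]
    omega

lemma Bop_E (i j k : ℕ) : Bop p (E p i j k) = E p i (j + 1) k := by
  by_cases h : i < p ∧ j < p ∧ k < p
  · rw [E_of_lt p h, ← Pi.basisFun_apply, ← bM, Bop, Module.Basis.constr_basis]
  · rw [E_of_not_lt p h, map_zero, eq_comm, E_of_not_lt]
    omega

lemma Cop_E (i j k : ℕ) : Cop p (E p i j k) = E p (i + 1) j k := by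
  by_cases h : i < p ∧ j < p ∧ k < p
  · rw [E_of_lt p h, ← Pi.basisFun_apply, ← bM, Cop, Module.Basis.constr_basis]
  · rw [E_of_not_lt p h, map_zero, eq_comm, E_of_not_lt]
    omega

lemma Nop_E (i j k : ℕ) :
    Nop p (E p i j k) = ((j : ℕ) : ZMod p) • E p (i + 1) (j - 1) k := by
  by_cases h : i < p ∧ j < p ∧ k < p
  · rw [E_of_lt p h, ← Pi.basisFun_apply, ← bM, Nop, Module.Basis.constr_basis]
  · rw [E_of_not_lt p h, map_zero, eq_comm]
    by_cases h2 : (i + 1) < p ∧ (j - 1) < p ∧ k < p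
    · have hj : j = p := by omega
      rw [hj, ZMod.natCast_self, zero_smul]
    · rw [E_of_not_lt p h2, smul_zero]

lemma Aop_E (i j k : ℕ) :
    Aop p (E p i j k) = E p i j (k + 1) + ((j : ℕ) : ZMod p) • E p (i + 1) (j - 1) k := by
  rw [Aop, LinearMap.add_apply, Sop_E, Nop_E]



lemma rel_ab : Aop p * Bop p = Bop p * Aop p + Cop p := by
  refine (bM p).ext fun t => ?_
  obtain ⟨⟨i, hi⟩, ⟨j, hj⟩, ⟨k, hk⟩⟩ := t
  simp only [bM_eq, Module.End.mul_apply, LinearMap.add_apply, map_add, map_smul,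
    Aop_E, Bop_E, Cop_E]
  rcases Nat.eq_zero_or_pos j with hj0 | hj0
  · subst hj0; simp
  · have h1 : j - 1 + 1 = j := by omega
    rw [h1]
    have h2 : ((j + 1 : ℕ) : ZMod p) = (j : ZMod p) + 1 := by push_cast; ring
    rw [h2, add_smul, one_smul]
    abel

lemma rel_ac : Aop p * Cop p = Cop p * Aop p := by
  refine (bM p).ext fun t => ?_
  simp only [bM_eq, Module.End.mul_apply, map_add, map_smul, Aop_E, Cop_E]

lemma rel_bc : Bop p * Cop p = Cop p * Bop p := by
  refine (bM p).ext fun t => ?_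
  simp only [bM_eq, Module.End.mul_apply, Bop_E, Cop_E]

lemma Sop_pow_E (n i j k : ℕ) : (Sop p ^ n) (E p i j k) = E p i j (k + n) := by
  induction n with
  | zero => simp
  | succ n ih =>
    rw [pow_succ', Module.End.mul_apply, ih, Sop_E] <;> try (congr 1 <;> omega)

lemma Bop_pow_E (n i j k : ℕ) : (Bop p ^ n) (E p i j k) = E p i (j + n) k := by
  induction n with
  | zero => simp
  | succ n ih =>
    rw [pow_succ', Module.End.mul_apply, ih, Bop_E] <;> try (congr 1 <;> omega)

lemma Cop_pow_E (n i j k : ℕ) : (Cop p ^ n) (E p i j k) = E p (i + n) j k := by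
  induction n with
  | zero => simp
  | succ n ih =>
    rw [pow_succ', Module.End.mul_apply, ih, Cop_E] <;> try (congr 1 <;> omega)

lemma Nop_pow_E (n i j k : ℕ) :
    ∃ z : ZMod p, (Nop p ^ n) (E p i j k) = z • E p (i + n) (j - n) k := by
  induction n with
  | zero => exact ⟨1, by simp⟩
  | succ n ih =>
    obtain ⟨z, hz⟩ := ih
    refine ⟨z * ((j - n : ℕ) : ZMod p), ?_⟩
    rw [pow_succ', Module.End.mul_apply, hz, map_smul, Nop_E, smul_smul,
      Nat.sub_sub] <;> try (congr 2 <;> omega)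

lemma Sop_pow_p : Sop p ^ p = 0 := by
  refine (bM p).ext fun t => ?_
  rw [bM_eq, Sop_pow_E, LinearMap.zero_apply, E_of_not_lt]
  omega

lemma Bop_pow_p : Bop p ^ p = 0 := by
  refine (bM p).ext fun t => ?_
  rw [bM_eq, Bop_pow_E, LinearMap.zero_apply, E_of_not_lt]
  omega

lemma Cop_pow_p : Cop p ^ p = 0 := by
  refine (bM p).ext fun t => ?_
  rw [bM_eq, Cop_pow_E, LinearMap.zero_apply, E_of_not_lt]
  omega

lemma Nop_pow_p : Nop p ^ p = 0 := by
  refine (bM p).ext fun t => ?_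
  obtain ⟨z, hz⟩ := Nop_pow_E p p t.1 t.2.1 t.2.2
  rw [bM_eq, hz, LinearMap.zero_apply, E_of_not_lt, smul_zero]
  omega

lemma commute_SN : Commute (Sop p) (Nop p) := by
  refine (bM p).ext fun t => ?_
  simp only [bM_eq, Module.End.mul_apply, map_smul, Sop_E, Nop_E]

lemma Aop_pow_p (hp : p.Prime) : Aop p ^ p = 0 := by
  haveI : Fact p.Prime := ⟨hp⟩
  haveI : NeZero p := ⟨hp.ne_zero⟩
  haveI : CharP (Module.End (ZMod p) (M p)) p := by
    refine charP_of_injective_algebraMap (R := ZMod p) ?_ p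
    intro r s h
    have := congrFun (congrArg (fun f => (f : Module.End (ZMod p) (M p)) (E p 0 0 0))
      h) ((0 : Fin p), (0 : Fin p), (0 : Fin p))
    simpa [Module.algebraMap_end_apply, E_of_lt p ⟨hp.pos, hp.pos, hp.pos⟩,
      Pi.single_apply] using this
  rw [Aop, add_pow_char_of_commute _ (commute_SN p), Sop_pow_p, Nop_pow_p, add_zero]

lemma Aop_pow_E0 (n i k : ℕ) : (Aop p ^ n) (E p i 0 k) = E p i 0 (k + n) := by
  induction n with
  | zero => simp
  | succ n ih =>
    rw [pow_succ', Module.End.mul_apply, ih, Aop_E]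
    simp <;> try (congr 1 <;> omega)

noncomputable def rep0 : FreeAlgebra (ZMod p) (Fin 3) →ₐ[ZMod p] Module.End (ZMod p) (M p) :=
  FreeAlgebra.lift (ZMod p) ![Aop p, Bop p, Cop p]

lemma rep0_ι0 : rep0 p (FreeAlgebra.ι (ZMod p) (0 : Fin 3)) = Aop p := by
  simp [rep0]

lemma rep0_ι1 : rep0 p (FreeAlgebra.ι (ZMod p) (1 : Fin 3)) = Bop p := by
  simp [rep0]

lemma rep0_ι2 : rep0 p (FreeAlgebra.ι (ZMod p) (2 : Fin 3)) = Cop p := by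
  simp [rep0]

lemma rep0_rel (hp : p.Prime) : ∀ ⦃u v⦄, heisRel p u v → rep0 p u = rep0 p v := by
  intro u v h
  rcases h with ⟨hu, hv⟩ | ⟨hu, hv⟩ | ⟨hu, hv⟩ | ⟨hu, hv⟩ | ⟨hu, hv⟩ | ⟨hu, hv⟩ <;>
    subst hu hv <;>
    simp only [map_mul, map_add, map_pow, map_zero, rep0_ι0, rep0_ι1, rep0_ι2]
  · exact rel_ab p
  · exact rel_ac p
  · exact rel_bc p
  · exact Aop_pow_p p hp
  · exact Bop_pow_p p
  · exact Cop_pow_p p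

noncomputable def rep (hp : p.Prime) : HeisAlg p →ₐ[ZMod p] Module.End (ZMod p) (M p) :=
  RingQuot.liftAlgHom (ZMod p) ⟨rep0 p, rep0_rel p hp⟩

lemma rep_mk (hp : p.Prime) (x : FreeAlgebra (ZMod p) (Fin 3)) :
    rep p hp (RingQuot.mkAlgHom (ZMod p) (heisRel p) x) = rep0 p x := by
  rw [rep, RingQuot.liftAlgHom_mkAlgHom_apply]

lemma rep_monomial (hp : p.Prime) (t : Fin p × Fin p × Fin p) :
    rep p hp (heisMonomial p t) (E p 0 0 0) = bM p t := by
  rw [heisMonomial, map_mul, map_mul, map_pow, map_pow, map_pow,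
    rep_mk, rep_mk, rep_mk, rep0_ι0, rep0_ι1, rep0_ι2,
    Module.End.mul_apply, Module.End.mul_apply, Aop_pow_E0, Bop_pow_E, Cop_pow_E,
    bM_eq]
  norm_num

lemma indep (hp : p.Prime) : LinearIndependent (ZMod p) (heisMonomial p) := by
  let ψ : HeisAlg p →ₗ[ZMod p] M p :=
    { toFun := fun x => rep p hp x (E p 0 0 0)
      map_add' := fun x y => by simp [map_add]
      map_smul' := fun r x => by simp [map_smul] }
  refine LinearIndependent.of_comp ψ ?_
  have : ψ ∘ heisMonomial p = bM p := funext fun t => rep_monomial p hp t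
  rw [this]
  exact (bM p).linearIndependent

noncomputable def aA : HeisAlg p :=
  RingQuot.mkAlgHom (ZMod p) (heisRel p) (FreeAlgebra.ι (ZMod p) (0 : Fin 3))

noncomputable def bA : HeisAlg p :=
  RingQuot.mkAlgHom (ZMod p) (heisRel p) (FreeAlgebra.ι (ZMod p) (1 : Fin 3))

noncomputable def cA : HeisAlg p :=
  RingQuot.mkAlgHom (ZMod p) (heisRel p) (FreeAlgebra.ι (ZMod p) (2 : Fin 3))

lemma hab : aA p * bA p = bA p * aA p + cA p := by
  rw [aA, bA, cA, ← map_mul, ← map_mul, ← map_add]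
  exact RingQuot.mkAlgHom_rel _ (Or.inl ⟨rfl, rfl⟩)

lemma hac : aA p * cA p = cA p * aA p := by
  rw [aA, cA, ← map_mul, ← map_mul]
  exact RingQuot.mkAlgHom_rel _ (Or.inr (Or.inl ⟨rfl, rfl⟩))

lemma hbc : bA p * cA p = cA p * bA p := by
  rw [bA, cA, ← map_mul, ← map_mul]
  exact RingQuot.mkAlgHom_rel _ (Or.inr (Or.inr (Or.inl ⟨rfl, rfl⟩)))

lemma hap : aA p ^ p = 0 := by
  rw [aA, ← map_pow, show (0 : HeisAlg p) = RingQuot.mkAlgHom (ZMod p) (heisRel p) 0 from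
    (map_zero _).symm]
  exact RingQuot.mkAlgHom_rel _ (Or.inr (Or.inr (Or.inr (Or.inl ⟨rfl, rfl⟩))))

lemma hbp : bA p ^ p = 0 := by
  rw [bA, ← map_pow, show (0 : HeisAlg p) = RingQuot.mkAlgHom (ZMod p) (heisRel p) 0 from
    (map_zero _).symm]
  exact RingQuot.mkAlgHom_rel _ (Or.inr (Or.inr (Or.inr (Or.inr (Or.inl ⟨rfl, rfl⟩)))))

lemma hcp : cA p ^ p = 0 := by
  rw [cA, ← map_pow, show (0 : HeisAlg p) = RingQuot.mkAlgHom (ZMod p) (heisRel p) 0 from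
    (map_zero _).symm]
  exact RingQuot.mkAlgHom_rel _ (Or.inr (Or.inr (Or.inr (Or.inr (Or.inr ⟨rfl, rfl⟩)))))

noncomputable def m (i j k : ℕ) : HeisAlg p := cA p ^ i * bA p ^ j * aA p ^ k

lemma comm_ca : Commute (cA p) (aA p) := (hac p).symm
lemma comm_cb : Commute (cA p) (bA p) := (hbc p).symm

lemma akb (k : ℕ) :
    aA p ^ (k + 1) * bA p = bA p * aA p ^ (k + 1) +
      ((k + 1 : ℕ) : ZMod p) • (cA p * aA p ^ k) := by
  induction k with
  | zero => simpa using hab p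
  | succ k ih =>
    calc aA p ^ (k + 2) * bA p
        = aA p * (aA p ^ (k + 1) * bA p) := by rw [← mul_assoc, ← pow_succ']
      _ = aA p * (bA p * aA p ^ (k + 1)) +
            ((k + 1 : ℕ) : ZMod p) • (aA p * (cA p * aA p ^ k)) := by
          rw [ih, mul_add, mul_smul_comm]
      _ = (aA p * bA p) * aA p ^ (k + 1) +
            ((k + 1 : ℕ) : ZMod p) • (cA p * aA p ^ (k + 1)) := by
          rw [← mul_assoc, ← mul_assoc, hac p, mul_assoc (cA p), ← pow_succ']
      _ = bA p * aA p ^ (k + 2) + (cA p * aA p ^ (k + 1)) +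
            ((k + 1 : ℕ) : ZMod p) • (cA p * aA p ^ (k + 1)) := by
          rw [hab p, add_mul, mul_assoc, ← pow_succ']
      _ = bA p * aA p ^ (k + 2) + ((k + 2 : ℕ) : ZMod p) • (cA p * aA p ^ (k + 1)) := by
          have h2 : ((k + 2 : ℕ) : ZMod p) = ((k + 1 : ℕ) : ZMod p) + 1 := by push_cast; ring
          rw [h2, add_smul, one_smul]
          abel

lemma pow_mul_c (i j : ℕ) : (cA p ^ i * bA p ^ j) * cA p = cA p ^ (i + 1) * bA p ^ j := by
  rw [mul_assoc, ((comm_cb p).pow_right j).symm.eq, ← mul_assoc, ← pow_succ]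

lemma m_mul_a (i j k : ℕ) : m p i j k * aA p = m p i j (k + 1) := by
  rw [m, m, mul_assoc, ← pow_succ]

lemma m_mul_c (i j k : ℕ) : m p i j k * cA p = m p (i + 1) j k := by
  rw [m, m, mul_assoc, ((comm_ca p).pow_right k).symm.eq, ← mul_assoc, pow_mul_c]

lemma m_mul_b (i j k : ℕ) :
    m p i j k * bA p = m p i (j + 1) k + ((k : ℕ) : ZMod p) • m p (i + 1) j (k - 1) := by
  rcases k with _ | k
  · simp [m, mul_assoc, ← pow_succ]
  · rw [m, mul_assoc, akb p k, mul_add, mul_smul_comm, Nat.add_sub_cancel]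
    congr 1
    · rw [← mul_assoc, mul_assoc (cA p ^ i), ← pow_succ, m]
    · rw [m, ← mul_assoc, pow_mul_c]


lemma pow_eq_zero_of_ge {x : HeisAlg p} (hx : x ^ p = 0) {n : ℕ} (hn : p ≤ n) : x ^ n = 0 := by
  rw [← Nat.add_sub_cancel' hn, pow_add, hx, zero_mul]

noncomputable def Sspan : Submodule (ZMod p) (HeisAlg p) :=
  Submodule.span (ZMod p) (Set.range (heisMonomial p))

lemma m_mem (i j k : ℕ) : m p i j k ∈ Sspan p := by
  by_cases h : i < p ∧ j < p ∧ k < p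
  · exact Submodule.subset_span ⟨(⟨i, h.1⟩, ⟨j, h.2.1⟩, ⟨k, h.2.2⟩), rfl⟩
  · rw [not_and_or, not_and_or] at h
    have h0 : m p i j k = 0 := by
      rcases h with h | h | h
      · rw [m, pow_eq_zero_of_ge p (hcp p) (le_of_not_gt h), zero_mul, zero_mul]
      · rw [m, pow_eq_zero_of_ge p (hbp p) (le_of_not_gt h), mul_zero, zero_mul]
      · rw [m, pow_eq_zero_of_ge p (hap p) (le_of_not_gt h), mul_zero]
    rw [h0]
    exact zero_mem _

lemma S_mul_a {x : HeisAlg p} (hx : x ∈ Sspan p) : x * aA p ∈ Sspan p := by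
  induction hx using Submodule.span_induction with
  | mem y hy =>
    obtain ⟨t, rfl⟩ := hy
    rw [show heisMonomial p t = m p t.1 t.2.1 t.2.2 from rfl, m_mul_a]
    exact m_mem p _ _ _
  | zero => rw [zero_mul]; exact zero_mem _
  | add y z hy hz hy' hz' => rw [add_mul]; exact add_mem hy' hz'
  | smul r y hy hy' => rw [smul_mul_assoc]; exact Submodule.smul_mem _ _ hy'

lemma S_mul_b {x : HeisAlg p} (hx : x ∈ Sspan p) : x * bA p ∈ Sspan p := by
  induction hx using Submodule.span_induction with
  | mem y hy =>
    obtain ⟨t, rfl⟩ := hy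
    rw [show heisMonomial p t = m p t.1 t.2.1 t.2.2 from rfl, m_mul_b]
    exact add_mem (m_mem p _ _ _) (Submodule.smul_mem _ _ (m_mem p _ _ _))
  | zero => rw [zero_mul]; exact zero_mem _
  | add y z hy hz hy' hz' => rw [add_mul]; exact add_mem hy' hz'
  | smul r y hy hy' => rw [smul_mul_assoc]; exact Submodule.smul_mem _ _ hy'

lemma S_mul_c {x : HeisAlg p} (hx : x ∈ Sspan p) : x * cA p ∈ Sspan p := by
  induction hx using Submodule.span_induction with
  | mem y hy =>
    obtain ⟨t, rfl⟩ := hy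
    rw [show heisMonomial p t = m p t.1 t.2.1 t.2.2 from rfl, m_mul_c]
    exact m_mem p _ _ _
  | zero => rw [zero_mul]; exact zero_mem _
  | add y z hy hz hy' hz' => rw [add_mul]; exact add_mem hy' hz'
  | smul r y hy hy' => rw [smul_mul_assoc]; exact Submodule.smul_mem _ _ hy'

lemma S_mul_pow_a {x : HeisAlg p} (hx : x ∈ Sspan p) (n : ℕ) : x * aA p ^ n ∈ Sspan p := by
  induction n with
  | zero => simpa using hx
  | succ n ih => rw [pow_succ, ← mul_assoc]; exact S_mul_a p ih

lemma S_mul_pow_b {x : HeisAlg p} (hx : x ∈ Sspan p) (n : ℕ) : x * bA p ^ n ∈ Sspan p := by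
  induction n with
  | zero => simpa using hx
  | succ n ih => rw [pow_succ, ← mul_assoc]; exact S_mul_b p ih

lemma S_mul_pow_c {x : HeisAlg p} (hx : x ∈ Sspan p) (n : ℕ) : x * cA p ^ n ∈ Sspan p := by
  induction n with
  | zero => simpa using hx
  | succ n ih => rw [pow_succ, ← mul_assoc]; exact S_mul_c p ih

lemma S_mul {x y : HeisAlg p} (hx : x ∈ Sspan p) (hy : y ∈ Sspan p) :
    x * y ∈ Sspan p := by
  induction hy using Submodule.span_induction with
  | mem y hy =>
    obtain ⟨t, rfl⟩ := hy
    rw [show heisMonomial p t = m p t.1 t.2.1 t.2.2 from rfl, m,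
      ← mul_assoc, ← mul_assoc]
    exact S_mul_pow_a p (S_mul_pow_b p (S_mul_pow_c p hx _) _) _
  | zero => rw [mul_zero]; exact zero_mem _
  | add y z hy hz hy' hz' => rw [mul_add]; exact add_mem hy' hz'
  | smul r y hy hy' => rw [mul_smul_comm]; exact Submodule.smul_mem _ _ hy'

lemma one_mem_S : (1 : HeisAlg p) ∈ Sspan p := by
  have h1 : (1 : HeisAlg p) = m p 0 0 0 := by simp [m]
  rw [h1]
  exact m_mem p 0 0 0

lemma span_top : Sspan p = ⊤ := by
  rw [eq_top_iff]
  rintro x -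
  obtain ⟨y, rfl⟩ := RingQuot.mkAlgHom_surjective (ZMod p) (heisRel p) x
  induction y using FreeAlgebra.induction with
  | grade0 r =>
    rw [AlgHom.commutes, Algebra.algebraMap_eq_smul_one]
    exact Submodule.smul_mem _ _ (one_mem_S p)
  | grade1 i =>
    fin_cases i
    · show RingQuot.mkAlgHom (ZMod p) (heisRel p) (FreeAlgebra.ι (ZMod p) (0 : Fin 3)) ∈ Sspan p
      rw [show RingQuot.mkAlgHom (ZMod p) (heisRel p) (FreeAlgebra.ι (ZMod p) (0 : Fin 3)) =
          m p 0 0 1 from by simp [m, aA]]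
      exact m_mem p 0 0 1
    · show RingQuot.mkAlgHom (ZMod p) (heisRel p) (FreeAlgebra.ι (ZMod p) (1 : Fin 3)) ∈ Sspan p
      rw [show RingQuot.mkAlgHom (ZMod p) (heisRel p) (FreeAlgebra.ι (ZMod p) (1 : Fin 3)) =
        m p 0 1 0 from by simp [m, bA]]
      exact m_mem p 0 1 0
    · show RingQuot.mkAlgHom (ZMod p) (heisRel p) (FreeAlgebra.ι (ZMod p) (2 : Fin 3)) ∈ Sspan p
      rw [show RingQuot.mkAlgHom (ZMod p) (heisRel p) (FreeAlgebra.ι (ZMod p) (2 : Fin 3)) =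
        m p 1 0 0 from by simp [m, cA]]
      exact m_mem p 1 0 0
  | mul a b ha hb => rw [map_mul]; exact S_mul p ha hb
  | add a b ha hb => rw [map_add]; exact add_mem ha hb

end HeisAux

theorem heisAlg_monomial_basis (p : ℕ) (hp : p.Prime) (hodd : Odd p) :
    LinearIndependent (ZMod p) (heisMonomial p) ∧
    Submodule.span (ZMod p) (Set.range (heisMonomial p)) = ⊤ ∧
    Module.finrank (ZMod p) (HeisAlg p) = p ^ 3 := by
  refine ⟨HeisAux.indep p hp, HeisAux.span_top p, ?_⟩
  haveI : Fact p.Prime := ⟨hp⟩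
  let b : Module.Basis (Fin p × Fin p × Fin p) (ZMod p) (HeisAlg p) :=
    Module.Basis.mk (HeisAux.indep p hp) (HeisAux.span_top p).ge
  rw [Module.finrank_eq_card_basis b, Fintype.card_prod, Fintype.card_prod,
    Fintype.card_fin]
  ring
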